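/- arXiv:1908.05826 — 4 statements merged into one kernel-verified Lean document; each statement's English description precedes it below -/
import Mathlib

section
/- Let ℬ be a closed subarrangement of a central arrangement 𝒜. Then the projection π: 𝕃(𝒜) → 𝕃(ℬ) (sending hyperplanes in 𝒜∖ℬ to 0) maps the holonomy relation ideal I(𝒜) onto I(ℬ), and moreover I(𝒜) ∩ 𝕃(ℬ) = I(ℬ). -/
open Module

noncomputable section

/-- The ambient type of subspaces of `ℂ^ℓ`; a central arrangement is a finite set of
codimension-1 subspaces. -/
abbrev HypSp (ℓ : ℕ) := Submodule ℂ (Fin ℓ → ℂ)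

/-- The rank (codimension) of a flat. -/
def flatRank {ℓ : ℕ} (W : HypSp ℓ) : ℕ := ℓ - finrank ℂ W

/-- `𝒜` is a central arrangement of hyperplanes in `ℂ^ℓ`. -/
def IsArrangement {ℓ : ℕ} (𝒜 : Finset (HypSp ℓ)) : Prop :=
  ∀ H ∈ 𝒜, finrank ℂ H + 1 = ℓ

/-- The free Lie algebra over `ℚ` on the hyperplanes of `𝒜`. -/
abbrev FreeLie {ℓ : ℕ} (𝒜 : Finset (HypSp ℓ)) := FreeLieAlgebra ℚ {H : HypSp ℓ // H ∈ 𝒜}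

/-- `L` is a rank-2 flat of `𝒜`: the intersection of two distinct hyperplanes of `𝒜`. -/
def IsRank2Flat {ℓ : ℕ} (𝒜 : Finset (HypSp ℓ)) (L : HypSp ℓ) : Prop :=
  ∃ H₁ ∈ 𝒜, ∃ H₂ ∈ 𝒜, H₁ ≠ H₂ ∧ L = H₁ ⊓ H₂

open scoped Classical in
/-- `ΣL`: the sum, in the free Lie algebra, of all hyperplanes of `𝒜` below the flat `L`
(i.e. containing `L`). -/
def sigmaL {ℓ : ℕ} (𝒜 : Finset (HypSp ℓ)) (L : HypSp ℓ) : FreeLie 𝒜 :=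
  ∑ H ∈ 𝒜.attach, if L ≤ (H : HypSp ℓ) then FreeLieAlgebra.of ℚ H else 0

/-- The holonomy ideal `I(𝒜)`, generated by the `[H, ΣL]` for rank-2 flats `L` and
hyperplanes `H ⪯ L`. -/
def holIdeal {ℓ : ℕ} (𝒜 : Finset (HypSp ℓ)) : LieIdeal ℚ (FreeLie 𝒜) :=
  LieSubmodule.lieSpan ℚ (FreeLie 𝒜)
    {z | ∃ L : HypSp ℓ, IsRank2Flat 𝒜 L ∧ ∃ H : {H : HypSp ℓ // H ∈ 𝒜},
      L ≤ (H : HypSp ℓ) ∧ z = ⁅FreeLieAlgebra.of ℚ H, sigmaL 𝒜 L⁆}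

/-- The holonomy Lie algebra `𝔥(𝒜) = 𝕃(𝒜)/I(𝒜)`. -/
abbrev Holonomy {ℓ : ℕ} (𝒜 : Finset (HypSp ℓ)) := FreeLie 𝒜 ⧸ holIdeal 𝒜

/-- `ℬ` is a closed subarrangement of `𝒜`. -/
def IsClosedSub {ℓ : ℕ} (ℬ 𝒜 : Finset (HypSp ℓ)) : Prop :=
  ℬ ⊆ 𝒜 ∧ ∀ α ∈ ℬ, ∀ β ∈ ℬ, α ≠ β → ∀ c ∈ 𝒜, c ∉ ℬ → flatRank (α ⊓ β ⊓ c) = 3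

open scoped Classical in
/-- The projection `π : 𝕃(𝒜) → 𝕃(ℬ)` sending hyperplanes outside `ℬ` to `0`. -/
def arrPi {ℓ : ℕ} (ℬ 𝒜 : Finset (HypSp ℓ)) : FreeLie 𝒜 →ₗ⁅ℚ⁆ FreeLie ℬ :=
  FreeLieAlgebra.lift ℚ (fun H => if h : (H : HypSp ℓ) ∈ ℬ then
    FreeLieAlgebra.of ℚ (⟨(H : HypSp ℓ), h⟩ : {H : HypSp ℓ // H ∈ ℬ}) else 0)

/-- The inclusion `σ : 𝕃(ℬ) → 𝕃(𝒜)`. -/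
def arrSigma {ℓ : ℕ} (ℬ 𝒜 : Finset (HypSp ℓ)) (hsub : ℬ ⊆ 𝒜) : FreeLie ℬ →ₗ⁅ℚ⁆ FreeLie 𝒜 :=
  FreeLieAlgebra.lift ℚ (fun H => FreeLieAlgebra.of ℚ
    (⟨(H : HypSp ℓ), hsub H.2⟩ : {H : HypSp ℓ // H ∈ 𝒜}))


open scoped Classical

lemma inf_rank_aux {ℓ : ℕ} {α β : HypSp ℓ}
    (hα : finrank ℂ α + 1 = ℓ) (hβ : finrank ℂ β + 1 = ℓ) (hne : α ≠ β) :
    finrank ℂ ↥(α ⊓ β) + 2 = ℓ := by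
  have hlt : α < α ⊔ β := by
    rcases lt_or_eq_of_le (le_sup_left : α ≤ α ⊔ β) with h | h
    · exact h
    · exfalso
      have hba : β ≤ α := h ▸ le_sup_right
      exact hne (Submodule.eq_of_le_of_finrank_eq hba (by omega)).symm
  have h1 : finrank ℂ ↥(α ⊔ β) ≤ ℓ := by
    simpa [Module.finrank_fin_fun] using Submodule.finrank_le (α ⊔ β)
  have h2 : finrank ℂ α < finrank ℂ ↥(α ⊔ β) := Submodule.finrank_lt_finrank_of_lt hlt
  have h3 := Submodule.finrank_sup_add_finrank_inf_eq α β
  omega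

lemma flat_eq_inf {ℓ : ℕ} {𝒜 : Finset (HypSp ℓ)} (harr : IsArrangement 𝒜) {L : HypSp ℓ}
    (hL : IsRank2Flat 𝒜 L) {α β : HypSp ℓ} (hα : α ∈ 𝒜) (hβ : β ∈ 𝒜) (hne : α ≠ β)
    (h1 : L ≤ α) (h2 : L ≤ β) : L = α ⊓ β := by
  obtain ⟨H₁, hH₁, H₂, hH₂, hne', rfl⟩ := hL
  have e1 := inf_rank_aux (harr H₁ hH₁) (harr H₂ hH₂) hne'
  have e2 := inf_rank_aux (harr α hα) (harr β hβ) hne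
  exact Submodule.eq_of_le_of_finrank_eq (le_inf h1 h2) (by omega)

lemma closed_key {ℓ : ℕ} {ℬ 𝒜 : Finset (HypSp ℓ)} (harr : IsArrangement 𝒜)
    (hclosed : IsClosedSub ℬ 𝒜) {L : HypSp ℓ} (hL : IsRank2Flat 𝒜 L)
    {α β : HypSp ℓ} (hα : α ∈ ℬ) (hβ : β ∈ ℬ) (hne : α ≠ β)
    (h1 : L ≤ α) (h2 : L ≤ β) : ∀ c ∈ 𝒜, L ≤ c → c ∈ ℬ := by
  intro c hc hLc
  by_contra hcB
  have h3 := hclosed.2 α hα β hβ hne c hc hcB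
  have heq : L = α ⊓ β := flat_eq_inf harr hL (hclosed.1 hα) (hclosed.1 hβ) hne h1 h2
  have hinf : α ⊓ β ⊓ c = α ⊓ β := inf_eq_left.mpr (heq ▸ hLc)
  rw [hinf] at h3
  have e2 := inf_rank_aux (harr α (hclosed.1 hα)) (harr β (hclosed.1 hβ)) hne
  unfold flatRank at h3
  omega

lemma arrPi_of_mem {ℓ : ℕ} (ℬ 𝒜 : Finset (HypSp ℓ)) (H : {H : HypSp ℓ // H ∈ 𝒜})
    (h : (H : HypSp ℓ) ∈ ℬ) :
    arrPi ℬ 𝒜 (FreeLieAlgebra.of ℚ H)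
      = FreeLieAlgebra.of ℚ (⟨(H : HypSp ℓ), h⟩ : {H : HypSp ℓ // H ∈ ℬ}) := by
  rw [arrPi, FreeLieAlgebra.lift_of_apply]
  exact dif_pos h

lemma arrPi_of_not_mem {ℓ : ℕ} (ℬ 𝒜 : Finset (HypSp ℓ)) (H : {H : HypSp ℓ // H ∈ 𝒜})
    (h : (H : HypSp ℓ) ∉ ℬ) :
    arrPi ℬ 𝒜 (FreeLieAlgebra.of ℚ H) = 0 := by
  rw [arrPi, FreeLieAlgebra.lift_of_apply]
  exact dif_neg h

lemma arrSigma_of {ℓ : ℕ} (ℬ 𝒜 : Finset (HypSp ℓ)) (hsub : ℬ ⊆ 𝒜)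
    (H : {H : HypSp ℓ // H ∈ ℬ}) :
    arrSigma ℬ 𝒜 hsub (FreeLieAlgebra.of ℚ H)
      = FreeLieAlgebra.of ℚ (⟨(H : HypSp ℓ), hsub H.2⟩ : {H : HypSp ℓ // H ∈ 𝒜}) := by
  rw [arrSigma, FreeLieAlgebra.lift_of_apply]

lemma pi_sigma_apply {ℓ : ℕ} (ℬ 𝒜 : Finset (HypSp ℓ)) (hsub : ℬ ⊆ 𝒜) (x : FreeLie ℬ) :
    arrPi ℬ 𝒜 (arrSigma ℬ 𝒜 hsub x) = x := by
  have h : (arrPi ℬ 𝒜).comp (arrSigma ℬ 𝒜 hsub) = LieHom.id :=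
    FreeLieAlgebra.hom_ext fun H => by
      rw [LieHom.comp_apply, arrSigma_of, arrPi_of_mem ℬ 𝒜 _ H.2]
      rfl
  have := congrArg (fun f : FreeLie ℬ →ₗ⁅ℚ⁆ FreeLie ℬ => f x) h
  simpa using this

lemma arrPi_sigmaL {ℓ : ℕ} (ℬ 𝒜 : Finset (HypSp ℓ)) (hsub : ℬ ⊆ 𝒜) (L : HypSp ℓ) :
    arrPi ℬ 𝒜 (sigmaL 𝒜 L) = sigmaL ℬ L := by
  set g : HypSp ℓ → FreeLie ℬ := fun K =>
    if h : K ∈ ℬ then (if L ≤ K then FreeLieAlgebra.of ℚ (⟨K, h⟩ : {H : HypSp ℓ // H ∈ ℬ}) else 0)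
    else 0 with hg
  have step1 : arrPi ℬ 𝒜 (sigmaL 𝒜 L) = ∑ H ∈ 𝒜.attach, g (H : HypSp ℓ) := by
    rw [sigmaL, ← LieHom.coe_toLinearMap, map_sum]
    refine Finset.sum_congr rfl fun H _ => ?_
    simp only [LieHom.coe_toLinearMap]
    by_cases hB : (H : HypSp ℓ) ∈ ℬ
    · by_cases hL : L ≤ (H : HypSp ℓ)
      · rw [if_pos hL, arrPi_of_mem ℬ 𝒜 H hB, hg]
        simp only [dif_pos hB, if_pos hL]
      · rw [if_neg hL, map_zero, hg]
        simp only [dif_pos hB, if_neg hL]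
    · by_cases hL : L ≤ (H : HypSp ℓ)
      · rw [if_pos hL, arrPi_of_not_mem ℬ 𝒜 H hB, hg]
        simp only [dif_neg hB]
      · rw [if_neg hL, map_zero, hg]
        simp only [dif_neg hB]
  have step2 : ∑ H ∈ 𝒜.attach, g (H : HypSp ℓ) = ∑ K ∈ 𝒜, g K := Finset.sum_attach 𝒜 g
  have step3 : ∑ K ∈ 𝒜, g K = ∑ K ∈ ℬ, g K :=
    (Finset.sum_subset hsub (fun x _ hx => dif_neg hx)).symm
  have step4 : ∑ K ∈ ℬ, g K = ∑ H ∈ ℬ.attach, g (H : HypSp ℓ) := (Finset.sum_attach ℬ g).symm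
  have step5 : ∑ H ∈ ℬ.attach, g (H : HypSp ℓ) = sigmaL ℬ L := by
    rw [sigmaL]
    refine Finset.sum_congr rfl fun H _ => ?_
    rw [hg]
    simp only [dif_pos H.2]
  rw [step1, step2, step3, step4, step5]

lemma arrSigma_sigmaL {ℓ : ℕ} (ℬ 𝒜 : Finset (HypSp ℓ)) (hsub : ℬ ⊆ 𝒜) (L : HypSp ℓ)
    (hall : ∀ c ∈ 𝒜, L ≤ c → c ∈ ℬ) :
    arrSigma ℬ 𝒜 hsub (sigmaL ℬ L) = sigmaL 𝒜 L := by
  set g : HypSp ℓ → FreeLie 𝒜 := fun K =>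
    if h : K ∈ 𝒜 then (if L ≤ K then FreeLieAlgebra.of ℚ (⟨K, h⟩ : {H : HypSp ℓ // H ∈ 𝒜}) else 0)
    else 0 with hg
  have step1 : arrSigma ℬ 𝒜 hsub (sigmaL ℬ L) = ∑ H ∈ ℬ.attach, g (H : HypSp ℓ) := by
    rw [sigmaL, ← LieHom.coe_toLinearMap, map_sum]
    refine Finset.sum_congr rfl fun H _ => ?_
    simp only [LieHom.coe_toLinearMap]
    by_cases hL : L ≤ (H : HypSp ℓ)
    · rw [if_pos hL, arrSigma_of, hg]
      simp only [dif_pos (hsub H.2), if_pos hL]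
    · rw [if_neg hL, map_zero, hg]
      simp only [dif_pos (hsub H.2), if_neg hL]
  have step2 : ∑ H ∈ ℬ.attach, g (H : HypSp ℓ) = ∑ K ∈ ℬ, g K := Finset.sum_attach ℬ g
  have step3 : ∑ K ∈ ℬ, g K = ∑ K ∈ 𝒜, g K := by
    refine Finset.sum_subset hsub fun x hx hxB => ?_
    rw [hg]
    simp only [dif_pos hx]
    rw [if_neg (fun hL => hxB (hall x hx hL))]
  have step4 : ∑ K ∈ 𝒜, g K = ∑ H ∈ 𝒜.attach, g (H : HypSp ℓ) := (Finset.sum_attach 𝒜 g).symm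
  have step5 : ∑ H ∈ 𝒜.attach, g (H : HypSp ℓ) = sigmaL 𝒜 L := by
    rw [sigmaL]
    refine Finset.sum_congr rfl fun H _ => ?_
    rw [hg]
    simp only [dif_pos H.2]
  rw [step1, step2, step3, step4, step5]

lemma pi_gen_mem {ℓ : ℕ} {ℬ 𝒜 : Finset (HypSp ℓ)} (harr : IsArrangement 𝒜)
    (hclosed : IsClosedSub ℬ 𝒜) {L : HypSp ℓ} (hL : IsRank2Flat 𝒜 L)
    (H : {H : HypSp ℓ // H ∈ 𝒜}) (hLH : L ≤ (H : HypSp ℓ)) :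
    arrPi ℬ 𝒜 ⁅FreeLieAlgebra.of ℚ H, sigmaL 𝒜 L⁆ ∈ holIdeal ℬ := by
  rw [LieHom.map_lie, arrPi_sigmaL ℬ 𝒜 hclosed.1]
  by_cases hHB : (H : HypSp ℓ) ∈ ℬ
  · rw [arrPi_of_mem ℬ 𝒜 H hHB]
    by_cases hflat : ∃ β ∈ ℬ, β ≠ (H : HypSp ℓ) ∧ L ≤ β
    · obtain ⟨β, hβ, hβne, hLβ⟩ := hflat
      apply LieSubmodule.subset_lieSpan
      refine ⟨L, ⟨(H : HypSp ℓ), hHB, β, hβ, Ne.symm hβne,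
        flat_eq_inf harr hL (hclosed.1 hHB) (hclosed.1 hβ) (Ne.symm hβne) hLH hLβ⟩,
        ⟨(H : HypSp ℓ), hHB⟩, hLH, rfl⟩
    · push_neg at hflat
      have hsig : sigmaL ℬ L
          = FreeLieAlgebra.of ℚ (⟨(H : HypSp ℓ), hHB⟩ : {H : HypSp ℓ // H ∈ ℬ}) := by
        rw [sigmaL]
        rw [Finset.sum_eq_single_of_mem (⟨(H : HypSp ℓ), hHB⟩ : {x // x ∈ ℬ})
          (Finset.mem_attach _ _)]
        · exact if_pos hLH
        · intro b _ hbne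
          have hnb : ¬ L ≤ (b : HypSp ℓ) := fun hLb =>
            hbne (Subtype.ext (not_not.mp (fun h => hflat b.1 b.2 h hLb)))
          exact if_neg hnb
      rw [hsig, lie_self]
      exact (holIdeal ℬ).zero_mem
  · rw [arrPi_of_not_mem ℬ 𝒜 H hHB, zero_lie]
    exact (holIdeal ℬ).zero_mem

lemma mem_hol_of_pi {ℓ : ℕ} {ℬ 𝒜 : Finset (HypSp ℓ)} (harr : IsArrangement 𝒜)
    (hclosed : IsClosedSub ℬ 𝒜) {x : FreeLie 𝒜} (hx : x ∈ holIdeal 𝒜) :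
    arrPi ℬ 𝒜 x ∈ holIdeal ℬ := by
  have hle : holIdeal 𝒜 ≤ LieIdeal.comap (arrPi ℬ 𝒜) (holIdeal ℬ) := by
    apply LieSubmodule.lieSpan_le.mpr
    rintro z ⟨L, hL, H, hLH, rfl⟩
    rw [SetLike.mem_coe, LieIdeal.mem_comap]
    exact pi_gen_mem harr hclosed hL H hLH
  exact LieIdeal.mem_comap.mp (hle hx)

lemma mem_hol_of_sigma {ℓ : ℕ} {ℬ 𝒜 : Finset (HypSp ℓ)} (harr : IsArrangement 𝒜)
    (hclosed : IsClosedSub ℬ 𝒜) (hsub : ℬ ⊆ 𝒜) {x : FreeLie ℬ} (hx : x ∈ holIdeal ℬ) :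
    arrSigma ℬ 𝒜 hsub x ∈ holIdeal 𝒜 := by
  have hle : holIdeal ℬ ≤ LieIdeal.comap (arrSigma ℬ 𝒜 hsub) (holIdeal 𝒜) := by
    apply LieSubmodule.lieSpan_le.mpr
    rintro z ⟨L, hL, H, hLH, rfl⟩
    rw [SetLike.mem_coe, LieIdeal.mem_comap]
    obtain ⟨α, hα, β, hβ, hne, rfl⟩ := hL
    have hLA : IsRank2Flat 𝒜 (α ⊓ β) := ⟨α, hsub hα, β, hsub hβ, hne, rfl⟩
    have hall := closed_key harr hclosed hLA hα hβ hne inf_le_left inf_le_right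
    rw [LieHom.map_lie, arrSigma_of, arrSigma_sigmaL ℬ 𝒜 hsub _ hall]
    exact LieSubmodule.subset_lieSpan ⟨α ⊓ β, hLA, ⟨(H : HypSp ℓ), hsub H.2⟩, hLH, rfl⟩
  exact LieIdeal.mem_comap.mp (hle hx)

/- STATEMENT 5: If ℬ is closed in the central arrangement 𝒜, then the projection
π : 𝕃(𝒜) → 𝕃(ℬ) maps I(𝒜) onto I(ℬ), and I(𝒜) ∩ 𝕃(ℬ) = I(ℬ), where 𝕃(ℬ) is viewed
inside 𝕃(𝒜) via the (injective) inclusion σ. -/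

theorem closed_ideal_image {ℓ : ℕ} (ℬ 𝒜 : Finset (HypSp ℓ)) (harr : IsArrangement 𝒜)
    (hclosed : IsClosedSub ℬ 𝒜) (hsub : ℬ ⊆ 𝒜) :
    Submodule.map (arrPi ℬ 𝒜).toLinearMap (holIdeal 𝒜).toSubmodule
      = (holIdeal ℬ).toSubmodule ∧
    (holIdeal 𝒜).toSubmodule ⊓ LinearMap.range (arrSigma ℬ 𝒜 hsub).toLinearMap
      = Submodule.map (arrSigma ℬ 𝒜 hsub).toLinearMap (holIdeal ℬ).toSubmodule := by
  constructor
  · apply le_antisymm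
    · rw [Submodule.map_le_iff_le_comap]
      intro x hx
      rw [Submodule.mem_comap]
      exact mem_hol_of_pi harr hclosed hx
    · intro y hy
      exact ⟨arrSigma ℬ 𝒜 hsub y, mem_hol_of_sigma harr hclosed hsub hy,
        pi_sigma_apply ℬ 𝒜 hsub y⟩
  · apply le_antisymm
    · intro x hx
      obtain ⟨hxI, hxR⟩ := Submodule.mem_inf.mp hx
      obtain ⟨y, rfl⟩ := hxR
      refine Submodule.mem_map.mpr ⟨y, ?_, rfl⟩
      have h1 : arrPi ℬ 𝒜 (arrSigma ℬ 𝒜 hsub y) ∈ holIdeal ℬ :=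
        mem_hol_of_pi harr hclosed hxI
      rwa [pi_sigma_apply ℬ 𝒜 hsub y] at h1
    · rintro x hx
      obtain ⟨y, hy, rfl⟩ := Submodule.mem_map.mp hx
      exact Submodule.mem_inf.mpr ⟨mem_hol_of_sigma harr hclosed hsub hy,
        LinearMap.mem_range.mpr ⟨y, rfl⟩⟩

end
end

section
/- Let ℬ be a closed subarrangement of a central arrangement 𝒜. If α = [x_n, [x_{n-1}, ..., [x_1, x_0]...]] ∈ 𝕃(𝒜) is an iterated bracket with at least one entry x_i ∈ 𝒜∖ℬ, then modulo the ideal I(𝒜), α is congruent to a sum of iterated brackets all of whose entries lie in 𝒜∖ℬ. -/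
open Module

noncomputable section

/-- The left-normed bracket `[x_n, [x_{n-1}, ..., [x_1, x_0]...]]` with entries the
list `l = [x_n, ..., x_1]` and innermost entry `x₀`. -/
def nestedBracket {ℓ : ℕ} (𝒜 : Finset (HypSp ℓ)) (l : List {H : HypSp ℓ // H ∈ 𝒜})
    (x₀ : {H : HypSp ℓ // H ∈ 𝒜}) : FreeLie 𝒜 :=
  l.foldr (fun y acc => ⁅FreeLieAlgebra.of ℚ y, acc⁆) (FreeLieAlgebra.of ℚ x₀)

namespace ClosedRep

open FreeLieAlgebra

variable {ℓ : ℕ}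

/-- The set of "good" nested brackets: all entries outside `ℬ`. -/
def goodSet (ℬ 𝒜 : Finset (HypSp ℓ)) : Set (FreeLie 𝒜) :=
  {z : FreeLie 𝒜 | ∃ l' : List {H : HypSp ℓ // H ∈ 𝒜}, ∃ y₀ : {H : HypSp ℓ // H ∈ 𝒜},
      (∀ y ∈ l', (y : HypSp ℓ) ∉ ℬ) ∧ (y₀ : HypSp ℓ) ∉ ℬ ∧ z = nestedBracket 𝒜 l' y₀}

/-- Span of good brackets plus the holonomy ideal. -/
def TT (ℬ 𝒜 : Finset (HypSp ℓ)) : Submodule ℚ (FreeLie 𝒜) :=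
  Submodule.span ℚ (goodSet ℬ 𝒜) ⊔ (holIdeal 𝒜 : Submodule ℚ (FreeLie 𝒜))

lemma nested_cons (𝒜 : Finset (HypSp ℓ)) (c : {H : HypSp ℓ // H ∈ 𝒜})
    (l : List {H : HypSp ℓ // H ∈ 𝒜}) (x₀ : {H : HypSp ℓ // H ∈ 𝒜}) :
    nestedBracket 𝒜 (c :: l) x₀ = ⁅of ℚ c, nestedBracket 𝒜 l x₀⁆ := rfl

lemma my_lie_sum {𝒜 : Finset (HypSp ℓ)} {α : Type*} (a : FreeLie 𝒜) (s : Finset α)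
    (f : α → FreeLie 𝒜) : ⁅a, ∑ x ∈ s, f x⁆ = ∑ x ∈ s, ⁅a, f x⁆ := by
  induction s using Finset.cons_induction with
  | empty => simp
  | cons x s hx ih => rw [Finset.sum_cons, Finset.sum_cons, lie_add, ih]

lemma closure_lemma {ℬ 𝒜 : Finset (HypSp ℓ)} (harr : IsArrangement 𝒜)
    (hclosed : IsClosedSub ℬ 𝒜) {bv xv Hv : HypSp ℓ}
    (hxA : xv ∈ 𝒜) (_hHA : Hv ∈ 𝒜)
    (hbB : bv ∈ ℬ) (hxB : xv ∉ ℬ) (hHb : Hv ≠ bv) (hle : xv ⊓ bv ≤ Hv) : Hv ∉ ℬ := by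
  intro hHB
  have h3 := hclosed.2 Hv hHB bv hbB hHb xv hxA hxB
  have heq : Hv ⊓ bv ⊓ xv = xv ⊓ bv := by
    rw [inf_assoc, inf_comm bv xv, inf_eq_right.mpr hle]
  rw [heq] at h3
  have hsum := Submodule.finrank_sup_add_finrank_inf_eq xv bv
  have hxr := harr xv hxA
  have hbr := harr bv (hclosed.1 hbB)
  have hle2 : finrank ℂ ↥(xv ⊔ bv) ≤ ℓ := by
    have := Submodule.finrank_le (xv ⊔ bv)
    rwa [Module.finrank_fin_fun] at this
  unfold flatRank at h3
  omega

lemma key_rel {ℬ 𝒜 : Finset (HypSp ℓ)} (harr : IsArrangement 𝒜) (hclosed : IsClosedSub ℬ 𝒜)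
    (b x : {H : HypSp ℓ // H ∈ 𝒜}) (hb : (b : HypSp ℓ) ∈ ℬ) (hx : (x : HypSp ℓ) ∉ ℬ) :
    ⁅of ℚ b, of ℚ x⁆ ∈
      Submodule.span ℚ {z : FreeLie 𝒜 | ∃ H : {H : HypSp ℓ // H ∈ 𝒜}, (H : HypSp ℓ) ∉ ℬ ∧
          z = ⁅of ℚ x, of ℚ H⁆}
        ⊔ (holIdeal 𝒜 : Submodule ℚ (FreeLie 𝒜)) := by
  classical
  have hxb : x ≠ b := fun h => hx (by rw [h]; exact hb)
  have hcoe : (x : HypSp ℓ) ≠ (b : HypSp ℓ) := fun h => hxb (Subtype.ext h)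
  set L : HypSp ℓ := (x : HypSp ℓ) ⊓ (b : HypSp ℓ) with hLdef
  have hflat : IsRank2Flat 𝒜 L := ⟨x, x.2, b, b.2, hcoe, rfl⟩
  have hzI : ⁅of ℚ x, sigmaL 𝒜 L⁆ ∈ holIdeal 𝒜 :=
    LieSubmodule.subset_lieSpan ⟨L, hflat, x, inf_le_left, rfl⟩
  have hexp : ⁅of ℚ x, sigmaL 𝒜 L⁆ =
      ∑ H ∈ 𝒜.attach, (if L ≤ (H : HypSp ℓ) then ⁅of ℚ x, of ℚ H⁆ else 0) := by
    rw [sigmaL, my_lie_sum]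
    exact Finset.sum_congr rfl fun H _ => by split_ifs <;> simp
  have hfx : (if L ≤ (x : HypSp ℓ) then ⁅of ℚ x, of ℚ x⁆ else (0 : FreeLie 𝒜)) = 0 := by
    split_ifs <;> simp
  have hbmem : b ∈ 𝒜.attach.erase x :=
    Finset.mem_erase.mpr ⟨hxb.symm, Finset.mem_attach _ _⟩
  have hsplit : ⁅of ℚ x, sigmaL 𝒜 L⁆ = ⁅of ℚ x, of ℚ b⁆ +
      ∑ H ∈ (𝒜.attach.erase x).erase b,
        (if L ≤ (H : HypSp ℓ) then ⁅of ℚ x, of ℚ H⁆ else 0) := by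
    rw [hexp, ← Finset.add_sum_erase _ _ (Finset.mem_attach 𝒜 x), hfx, zero_add,
      ← Finset.add_sum_erase _ _ hbmem, if_pos (inf_le_right : L ≤ (b : HypSp ℓ))]
  have hRmem : (∑ H ∈ (𝒜.attach.erase x).erase b,
        (if L ≤ (H : HypSp ℓ) then ⁅of ℚ x, of ℚ H⁆ else 0)) ∈
      Submodule.span ℚ {z : FreeLie 𝒜 | ∃ H : {H : HypSp ℓ // H ∈ 𝒜}, (H : HypSp ℓ) ∉ ℬ ∧
          z = ⁅of ℚ x, of ℚ H⁆} := by
    refine Submodule.sum_mem _ fun H hH => ?_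
    have hHb : H ≠ b := (Finset.mem_erase.mp hH).1
    split_ifs with hLH
    · refine Submodule.subset_span ⟨H, ?_, rfl⟩
      exact closure_lemma harr hclosed x.2 H.2 hb hx (fun h => hHb (Subtype.ext h)) hLH
    · exact Submodule.zero_mem _
  have hfinal : ⁅of ℚ b, of ℚ x⁆ = (∑ H ∈ (𝒜.attach.erase x).erase b,
        (if L ≤ (H : HypSp ℓ) then ⁅of ℚ x, of ℚ H⁆ else 0)) - ⁅of ℚ x, sigmaL 𝒜 L⁆ := by
    rw [hsplit, ← lie_skew (of ℚ b) (of ℚ x)]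
    abel
  rw [hfinal]
  exact sub_mem (Submodule.mem_sup_left hRmem) (Submodule.mem_sup_right hzI)

lemma good_sub_le (ℬ 𝒜 : Finset (HypSp ℓ)) (x : {H : HypSp ℓ // H ∈ 𝒜})
    (hx : (x : HypSp ℓ) ∉ ℬ) :
    Submodule.span ℚ {z : FreeLie 𝒜 | ∃ H : {H : HypSp ℓ // H ∈ 𝒜}, (H : HypSp ℓ) ∉ ℬ ∧
        z = ⁅of ℚ x, of ℚ H⁆} ≤ Submodule.span ℚ (goodSet ℬ 𝒜) := by
  refine Submodule.span_le.mpr ?_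
  rintro z ⟨H, hH, rfl⟩
  exact Submodule.subset_span ⟨[x], H, by simpa using hx, hH, rfl⟩

lemma ideal_lie_right {𝒜 : Finset (HypSp ℓ)} {i : FreeLie 𝒜} (a : FreeLie 𝒜)
    (hi : i ∈ holIdeal 𝒜) : ⁅i, a⁆ ∈ holIdeal 𝒜 := by
  rw [← lie_skew]
  exact neg_mem ((holIdeal 𝒜).lie_mem hi)

lemma span_good_lie {ℬ 𝒜 : Finset (HypSp ℓ)} (c : {H : HypSp ℓ // H ∈ 𝒜})
    (hc : (c : HypSp ℓ) ∉ ℬ) {s : FreeLie 𝒜}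
    (hs : s ∈ Submodule.span ℚ (goodSet ℬ 𝒜)) :
    ⁅of ℚ c, s⁆ ∈ Submodule.span ℚ (goodSet ℬ 𝒜) := by
  induction hs using Submodule.span_induction with
  | mem z hz =>
    obtain ⟨l', y₀, hl', hy₀, rfl⟩ := hz
    refine Submodule.subset_span ⟨c :: l', y₀, ?_, hy₀, rfl⟩
    intro y hy
    rcases List.mem_cons.mp hy with h | h
    · subst h; exact hc
    · exact hl' y h
  | zero => rw [lie_zero]; exact Submodule.zero_mem _
  | add x y hx hy ihx ihy => rw [lie_add]; exact add_mem ihx ihy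
  | smul a x hx ih => rw [lie_smul]; exact Submodule.smul_mem _ _ ih

lemma lie_TT_of_notB {ℬ 𝒜 : Finset (HypSp ℓ)} {c : {H : HypSp ℓ // H ∈ 𝒜}}
    (hc : (c : HypSp ℓ) ∉ ℬ) {t : FreeLie 𝒜} (ht : t ∈ TT ℬ 𝒜) :
    ⁅of ℚ c, t⁆ ∈ TT ℬ 𝒜 := by
  rcases Submodule.mem_sup.mp ht with ⟨s, hs, i, hi, rfl⟩
  rw [lie_add]
  exact add_mem (Submodule.mem_sup_left (span_good_lie c hc hs))
    (Submodule.mem_sup_right ((holIdeal 𝒜).lie_mem hi))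

lemma lie_Pc_nested {ℬ 𝒜 : Finset (HypSp ℓ)} (c : {H : HypSp ℓ // H ∈ 𝒜})
    (hc : (c : HypSp ℓ) ∉ ℬ) (la' : List {H : HypSp ℓ // H ∈ 𝒜})
    (a₀ : {H : HypSp ℓ // H ∈ 𝒜}) (hla' : ∀ y ∈ la', (y : HypSp ℓ) ∉ ℬ)
    (ha₀ : (a₀ : HypSp ℓ) ∉ ℬ) {p : FreeLie 𝒜}
    (hp : p ∈ Submodule.span ℚ {z : FreeLie 𝒜 | ∃ H : {H : HypSp ℓ // H ∈ 𝒜},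
        (H : HypSp ℓ) ∉ ℬ ∧ z = ⁅of ℚ c, of ℚ H⁆}) :
    ⁅p, nestedBracket 𝒜 la' a₀⁆ ∈ Submodule.span ℚ (goodSet ℬ 𝒜) := by
  induction hp using Submodule.span_induction with
  | mem z hz =>
    obtain ⟨H, hH, rfl⟩ := hz
    rw [lie_lie]
    refine sub_mem (Submodule.subset_span ⟨c :: H :: la', a₀, ?_, ha₀, rfl⟩)
      (Submodule.subset_span ⟨H :: c :: la', a₀, ?_, ha₀, rfl⟩)
    · intro y hy
      rcases List.mem_cons.mp hy with h | h
      · subst h; exact hc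
      · rcases List.mem_cons.mp h with h' | h'
        · subst h'; exact hH
        · exact hla' y h'
    · intro y hy
      rcases List.mem_cons.mp hy with h | h
      · subst h; exact hH
      · rcases List.mem_cons.mp h with h' | h'
        · subst h'; exact hc
        · exact hla' y h'
  | zero => rw [zero_lie]; exact Submodule.zero_mem _
  | add x y hx hy ihx ihy => rw [add_lie]; exact add_mem ihx ihy
  | smul a x hx ih => rw [smul_lie]; exact Submodule.smul_mem _ _ ih

lemma lemE {ℬ 𝒜 : Finset (HypSp ℓ)} (harr : IsArrangement 𝒜) (hclosed : IsClosedSub ℬ 𝒜) :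
    ∀ (la : List {H : HypSp ℓ // H ∈ 𝒜}) (a₀ : {H : HypSp ℓ // H ∈ 𝒜}),
      (∀ y ∈ la, (y : HypSp ℓ) ∉ ℬ) → (a₀ : HypSp ℓ) ∉ ℬ →
      ∀ b : {H : HypSp ℓ // H ∈ 𝒜}, (b : HypSp ℓ) ∈ ℬ →
      ⁅of ℚ b, nestedBracket 𝒜 la a₀⁆ ∈ TT ℬ 𝒜 := by
  intro la
  induction la with
  | nil =>
    intro a₀ _ ha₀ b hb
    have h := key_rel harr hclosed b a₀ hb ha₀
    exact sup_le_sup (good_sub_le ℬ 𝒜 a₀ ha₀) le_rfl h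
  | cons c la' ih =>
    intro a₀ hla ha₀ b hb
    have hc : (c : HypSp ℓ) ∉ ℬ := hla c List.mem_cons_self
    have hla' : ∀ y ∈ la', (y : HypSp ℓ) ∉ ℬ := fun y hy => hla y (List.mem_cons_of_mem _ hy)
    rw [nested_cons, leibniz_lie]
    refine add_mem ?_ (lie_TT_of_notB hc (ih a₀ hla' ha₀ b hb))
    have hbc := key_rel harr hclosed b c hb hc
    rcases Submodule.mem_sup.mp hbc with ⟨p, hp, i, hi, hpi⟩
    rw [← hpi, add_lie]
    refine add_mem (Submodule.mem_sup_left (lie_Pc_nested c hc la' a₀ hla' ha₀ hp))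
      (Submodule.mem_sup_right (ideal_lie_right _ hi))

lemma lemE' {ℬ 𝒜 : Finset (HypSp ℓ)} (harr : IsArrangement 𝒜) (hclosed : IsClosedSub ℬ 𝒜)
    (c : {H : HypSp ℓ // H ∈ 𝒜}) (la : List {H : HypSp ℓ // H ∈ 𝒜})
    (a₀ : {H : HypSp ℓ // H ∈ 𝒜}) (hla : ∀ y ∈ la, (y : HypSp ℓ) ∉ ℬ)
    (ha₀ : (a₀ : HypSp ℓ) ∉ ℬ) :
    ⁅of ℚ c, nestedBracket 𝒜 la a₀⁆ ∈ TT ℬ 𝒜 := by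
  by_cases hc : (c : HypSp ℓ) ∈ ℬ
  · exact lemE harr hclosed la a₀ hla ha₀ c hc
  · refine Submodule.mem_sup_left (Submodule.subset_span ⟨c :: la, a₀, ?_, ha₀, rfl⟩)
    intro y hy
    rcases List.mem_cons.mp hy with h | h
    · subst h; exact hc
    · exact hla y h

lemma lie_TT {ℬ 𝒜 : Finset (HypSp ℓ)} (harr : IsArrangement 𝒜) (hclosed : IsClosedSub ℬ 𝒜)
    (a : {H : HypSp ℓ // H ∈ 𝒜}) {t : FreeLie 𝒜} (ht : t ∈ TT ℬ 𝒜) :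
    ⁅of ℚ a, t⁆ ∈ TT ℬ 𝒜 := by
  rcases Submodule.mem_sup.mp ht with ⟨s, hs, i, hi, rfl⟩
  clear ht
  rw [lie_add]
  refine add_mem ?_ (Submodule.mem_sup_right ((holIdeal 𝒜).lie_mem hi))
  induction hs using Submodule.span_induction with
  | mem z hz =>
    obtain ⟨l', y₀, h1, h2, rfl⟩ := hz
    exact lemE' harr hclosed a l' y₀ h1 h2
  | zero => rw [lie_zero]; exact Submodule.zero_mem _
  | add x y hx hy ihx ihy => rw [lie_add]; exact add_mem ihx ihy
  | smul r x hx ih => rw [lie_smul]; exact Submodule.smul_mem _ _ ih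

lemma lie_span_good_right {ℬ 𝒜 : Finset (HypSp ℓ)} (w : FreeLie 𝒜)
    (hgen : ∀ (l'' : List {H : HypSp ℓ // H ∈ 𝒜}) (y₀ : {H : HypSp ℓ // H ∈ 𝒜}),
      (∀ y ∈ l'', (y : HypSp ℓ) ∉ ℬ) → (y₀ : HypSp ℓ) ∉ ℬ →
      ⁅nestedBracket 𝒜 l'' y₀, w⁆ ∈ TT ℬ 𝒜)
    {s : FreeLie 𝒜} (hs : s ∈ Submodule.span ℚ (goodSet ℬ 𝒜)) :
    ⁅s, w⁆ ∈ TT ℬ 𝒜 := by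
  induction hs using Submodule.span_induction with
  | mem z hz =>
    obtain ⟨l'', y₀, h1, h2, rfl⟩ := hz
    exact hgen l'' y₀ h1 h2
  | zero => rw [zero_lie]; exact Submodule.zero_mem _
  | add x y hx hy ihx ihy => rw [add_lie]; exact add_mem ihx ihy
  | smul r x hx ih => rw [smul_lie]; exact Submodule.smul_mem _ _ ih

lemma lie_TT_right {ℬ 𝒜 : Finset (HypSp ℓ)} (w : FreeLie 𝒜)
    (hgen : ∀ (l'' : List {H : HypSp ℓ // H ∈ 𝒜}) (y₀ : {H : HypSp ℓ // H ∈ 𝒜}),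
      (∀ y ∈ l'', (y : HypSp ℓ) ∉ ℬ) → (y₀ : HypSp ℓ) ∉ ℬ →
      ⁅nestedBracket 𝒜 l'' y₀, w⁆ ∈ TT ℬ 𝒜)
    {t : FreeLie 𝒜} (ht : t ∈ TT ℬ 𝒜) : ⁅t, w⁆ ∈ TT ℬ 𝒜 := by
  rcases Submodule.mem_sup.mp ht with ⟨s, hs, i, hi, rfl⟩
  rw [add_lie]
  exact add_mem (lie_span_good_right w hgen hs)
    (Submodule.mem_sup_right (ideal_lie_right _ hi))

lemma lemG {ℬ 𝒜 : Finset (HypSp ℓ)} (harr : IsArrangement 𝒜) (hclosed : IsClosedSub ℬ 𝒜) :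
    ∀ (l : List {H : HypSp ℓ // H ∈ 𝒜}) (x₀ : {H : HypSp ℓ // H ∈ 𝒜})
      (la : List {H : HypSp ℓ // H ∈ 𝒜}) (a₀ : {H : HypSp ℓ // H ∈ 𝒜}),
      (∀ y ∈ la, (y : HypSp ℓ) ∉ ℬ) → (a₀ : HypSp ℓ) ∉ ℬ →
      ⁅nestedBracket 𝒜 la a₀, nestedBracket 𝒜 l x₀⁆ ∈ TT ℬ 𝒜 := by
  intro l
  induction l with
  | nil =>
    intro x₀ la a₀ hla ha₀
    have h : ⁅nestedBracket 𝒜 la a₀, nestedBracket 𝒜 [] x₀⁆ =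
        -⁅of ℚ x₀, nestedBracket 𝒜 la a₀⁆ := (lie_skew _ _).symm
    rw [h]
    exact neg_mem (lemE' harr hclosed x₀ la a₀ hla ha₀)
  | cons c l' ihl =>
    intro x₀ la a₀ hla ha₀
    rw [nested_cons, leibniz_lie]
    refine add_mem ?_ (lie_TT harr hclosed c (ihl x₀ la a₀ hla ha₀))
    have h2 : ⁅nestedBracket 𝒜 la a₀, of ℚ c⁆ =
        -⁅of ℚ c, nestedBracket 𝒜 la a₀⁆ := (lie_skew _ _).symm
    rw [h2, neg_lie]
    refine neg_mem ?_
    exact lie_TT_right (nestedBracket 𝒜 l' x₀)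
      (fun l'' y₀ h1 h2 => ihl x₀ l'' y₀ h1 h2)
      (lemE' harr hclosed c la a₀ hla ha₀)

end ClosedRep


/- STATEMENT 6: Let ℬ be closed in the central arrangement 𝒜.  If
α = [x_n, [x_{n-1}, ..., [x_1, x_0]...]] has at least one entry in 𝒜∖ℬ, then modulo
I(𝒜), α is congruent to a sum of iterated brackets all of whose entries lie in 𝒜∖ℬ,
i.e. to an element of the span of such brackets. -/

theorem closed_bracket_representative {ℓ : ℕ} (ℬ 𝒜 : Finset (HypSp ℓ))
    (harr : IsArrangement 𝒜) (hclosed : IsClosedSub ℬ 𝒜)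
    (l : List {H : HypSp ℓ // H ∈ 𝒜}) (x₀ : {H : HypSp ℓ // H ∈ 𝒜})
    (hentry : (x₀ : HypSp ℓ) ∉ ℬ ∨ ∃ y ∈ l, (y : HypSp ℓ) ∉ ℬ) :
    ∃ β ∈ Submodule.span ℚ
        {z : FreeLie 𝒜 | ∃ l' : List {H : HypSp ℓ // H ∈ 𝒜}, ∃ y₀ : {H : HypSp ℓ // H ∈ 𝒜},
          (∀ y ∈ l', (y : HypSp ℓ) ∉ ℬ) ∧ (y₀ : HypSp ℓ) ∉ ℬ ∧ z = nestedBracket 𝒜 l' y₀},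
      nestedBracket 𝒜 l x₀ - β ∈ holIdeal 𝒜 := by
  classical
  open ClosedRep in
  have key : ∀ (l : List {H : HypSp ℓ // H ∈ 𝒜}),
      ((x₀ : HypSp ℓ) ∉ ℬ ∨ ∃ y ∈ l, (y : HypSp ℓ) ∉ ℬ) →
      nestedBracket 𝒜 l x₀ ∈ ClosedRep.TT ℬ 𝒜 := by
    intro l
    induction l with
    | nil =>
      intro h
      rcases h with h | h
      · exact Submodule.mem_sup_left (Submodule.subset_span ⟨[], x₀, by simp, h, rfl⟩)
      · simp at h
    | cons c l' ih =>
      intro h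
      by_cases hrest : (x₀ : HypSp ℓ) ∉ ℬ ∨ ∃ y ∈ l', (y : HypSp ℓ) ∉ ℬ
      · rw [ClosedRep.nested_cons]
        exact ClosedRep.lie_TT harr hclosed c (ih hrest)
      · have hc : (c : HypSp ℓ) ∉ ℬ := by
          rcases h with h | ⟨y, hy, hyB⟩
          · exact absurd (Or.inl h) hrest
          · rcases List.mem_cons.mp hy with h' | h'
            · subst h'; exact hyB
            · exact absurd (Or.inr ⟨y, h', hyB⟩) hrest
        have := ClosedRep.lemG harr hclosed l' x₀ [] c (by simp) hc
        rw [ClosedRep.nested_cons]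
        exact this
  have hT := key l hentry
  rcases Submodule.mem_sup.mp hT with ⟨β, hβ, i, hi, hsum⟩
  refine ⟨β, hβ, ?_⟩
  have : nestedBracket 𝒜 l x₀ - β = i := by rw [← hsum]; abel
  rw [this]
  exact hi

end
end

section
/- Let ℬ be a closed subarrangement of a central arrangement 𝒜. Then the induced surjection π_*: 𝔥(𝒜) → 𝔥(ℬ) between holonomy Lie algebras splits, its kernel is the Lie subalgebra of 𝔥(𝒜) generated by the classes of hyperplanes in 𝒜∖ℬ, and 𝔥(𝒜) is an almost-direct product of 𝔥(ℬ) and Ker π_*: that is, [Ker π_*, σ_*(𝔥(ℬ))] ⊆ [Ker π_*, Ker π_*]. -/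
open Module

noncomputable section

/- STATEMENT 7: Let ℬ be closed in the central arrangement 𝒜.  The induced surjection
π₊ : 𝔥(𝒜) → 𝔥(ℬ) splits via σ₊, its kernel is the Lie subalgebra of 𝔥(𝒜) generated by
the classes of the hyperplanes in 𝒜∖ℬ, and 𝔥(𝒜) is an almost-direct product of 𝔥(ℬ)
and Ker π₊ : [Ker π₊, σ₊(𝔥(ℬ))] ⊆ [Ker π₊, Ker π₊]. -/

namespace CHADP

open FreeLieAlgebra

variable {ℓ : ℕ}

lemma inf_rank2 {α β : HypSp ℓ} (hα : finrank ℂ α + 1 = ℓ) (hβ : finrank ℂ β + 1 = ℓ)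
    (hne : α ≠ β) : finrank ℂ (α ⊓ β : HypSp ℓ) + 2 = ℓ := by
  have hsum := Submodule.finrank_sup_add_finrank_inf_eq α β
  have htop : finrank ℂ (Fin ℓ → ℂ) = ℓ := by simp
  have hle : finrank ℂ (α ⊔ β : HypSp ℓ) ≤ ℓ := by
    have := Submodule.finrank_le (α ⊔ β); omega
  have hmono : finrank ℂ α ≤ finrank ℂ (α ⊔ β : HypSp ℓ) :=
    Submodule.finrank_mono le_sup_left
  have hne' : finrank ℂ (α ⊔ β : HypSp ℓ) ≠ finrank ℂ α := by
    intro h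
    have h1 : α = α ⊔ β := Submodule.eq_of_le_of_finrank_le le_sup_left h.le
    have hba : β ≤ α := h1 ▸ le_sup_right
    have hba' : finrank ℂ α ≤ finrank ℂ β := by omega
    exact hne (Submodule.eq_of_le_of_finrank_le hba hba').symm
  omega

lemma flatRank_inf {α β : HypSp ℓ} (hα : finrank ℂ α + 1 = ℓ) (hβ : finrank ℂ β + 1 = ℓ)
    (hne : α ≠ β) : flatRank (α ⊓ β) = 2 := by
  have := inf_rank2 hα hβ hne
  unfold flatRank; omega

lemma closed_saturated {ℬ 𝒜 : Finset (HypSp ℓ)} (hclosed : IsClosedSub ℬ 𝒜)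
    (harr : IsArrangement 𝒜) {α β c : HypSp ℓ} (hα : α ∈ ℬ) (hβ : β ∈ ℬ) (hne : α ≠ β)
    (hc : c ∈ 𝒜) (hle : α ⊓ β ≤ c) : c ∈ ℬ := by
  by_contra hcB
  have h3 := hclosed.2 α hα β hβ hne c hc hcB
  rw [inf_eq_left.mpr hle] at h3
  have h2 : flatRank (α ⊓ β) = 2 :=
    flatRank_inf (harr α (hclosed.1 hα)) (harr β (hclosed.1 hβ)) hne
  omega

lemma flat_eq {𝒜 : Finset (HypSp ℓ)} (harr : IsArrangement 𝒜) {L : HypSp ℓ}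
    (hL : IsRank2Flat 𝒜 L) {α β : HypSp ℓ} (hα : α ∈ 𝒜) (hβ : β ∈ 𝒜) (hne : α ≠ β)
    (h1 : L ≤ α) (h2 : L ≤ β) : L = α ⊓ β := by
  obtain ⟨H₁, h1m, H₂, h2m, h12, rfl⟩ := hL
  have e1 := inf_rank2 (harr _ h1m) (harr _ h2m) h12
  have e2 := inf_rank2 (harr _ hα) (harr _ hβ) hne
  exact Submodule.eq_of_le_of_finrank_le (le_inf h1 h2) (by omega)

end CHADP

namespace CHADP
open FreeLieAlgebra
variable {ℓ : ℕ} {ℬ 𝒜 : Finset (HypSp ℓ)}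

lemma lmap_sum {L₁ L₂ : Type*} [LieRing L₁] [LieAlgebra ℚ L₁] [LieRing L₂] [LieAlgebra ℚ L₂]
    (f : L₁ →ₗ⁅ℚ⁆ L₂) {ι : Type*} (s : Finset ι) (g : ι → L₁) :
    f (∑ i ∈ s, g i) = ∑ i ∈ s, f (g i) := by
  rw [← LieHom.coe_toLinearMap]; exact map_sum _ _ _

lemma lmap_zero {L₁ L₂ : Type*} [LieRing L₁] [LieAlgebra ℚ L₁] [LieRing L₂] [LieAlgebra ℚ L₂]
    (f : L₁ →ₗ⁅ℚ⁆ L₂) : f 0 = 0 := by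
  rw [← LieHom.coe_toLinearMap]; exact map_zero _

open scoped Classical in
def sigTerm (𝒜 : Finset (HypSp ℓ)) (L K : HypSp ℓ) : FreeLie 𝒜 :=
  if h : K ∈ 𝒜 ∧ L ≤ K then FreeLieAlgebra.of ℚ (⟨K, h.1⟩ : {H : HypSp ℓ // H ∈ 𝒜}) else 0

lemma sigmaL_eq (𝒜 : Finset (HypSp ℓ)) (L : HypSp ℓ) :
    sigmaL 𝒜 L = ∑ K ∈ 𝒜, sigTerm 𝒜 L K := by
  classical
  rw [sigmaL, ← Finset.sum_attach 𝒜 (sigTerm 𝒜 L)]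
  refine Finset.sum_congr rfl fun x _ => ?_
  by_cases h : L ≤ (x : HypSp ℓ)
  · rw [if_pos h]; rw [sigTerm, dif_pos ⟨x.2, h⟩]
  · rw [if_neg h]; rw [sigTerm, dif_neg (fun hc => h hc.2)]

open scoped Classical in
lemma arrPi_of (H : {H : HypSp ℓ // H ∈ 𝒜}) :
    arrPi ℬ 𝒜 (of ℚ H) = if h : (H : HypSp ℓ) ∈ ℬ then
      of ℚ (⟨(H : HypSp ℓ), h⟩ : {H : HypSp ℓ // H ∈ ℬ}) else 0 :=
  FreeLieAlgebra.lift_of_apply _ _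

lemma arrSigma_of (hsub : ℬ ⊆ 𝒜) (H : {H : HypSp ℓ // H ∈ ℬ}) :
    arrSigma ℬ 𝒜 hsub (of ℚ H) =
      of ℚ (⟨(H : HypSp ℓ), hsub H.2⟩ : {H : HypSp ℓ // H ∈ 𝒜}) :=
  FreeLieAlgebra.lift_of_apply _ _

lemma arrSigma_sigmaL (hsub : ℬ ⊆ 𝒜) (L : HypSp ℓ)
    (hsat : ∀ c ∈ 𝒜, L ≤ c → c ∈ ℬ) :
    arrSigma ℬ 𝒜 hsub (sigmaL ℬ L) = sigmaL 𝒜 L := by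
  rw [sigmaL_eq, sigmaL_eq, lmap_sum]
  have h0 : ∀ K ∈ 𝒜, K ∉ ℬ → sigTerm 𝒜 L K = 0 := by
    intro K hK hKB
    rw [sigTerm]; exact dif_neg (fun hc => hKB (hsat K hK hc.2))
  rw [← Finset.sum_subset hsub h0]
  refine Finset.sum_congr rfl fun K hK => ?_
  by_cases h : L ≤ K
  · rw [sigTerm, sigTerm, dif_pos ⟨hK, h⟩, dif_pos ⟨hsub hK, h⟩, arrSigma_of]
  · rw [sigTerm, sigTerm, dif_neg (fun hc => h hc.2), dif_neg (fun hc => h hc.2), lmap_zero]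

lemma arrPi_sigmaL_sat (L : HypSp ℓ) (hsub : ℬ ⊆ 𝒜)
    (hsat : ∀ c ∈ 𝒜, L ≤ c → c ∈ ℬ) :
    arrPi ℬ 𝒜 (sigmaL 𝒜 L) = sigmaL ℬ L := by
  rw [sigmaL_eq, sigmaL_eq, lmap_sum]
  have h0 : ∀ K ∈ 𝒜, K ∉ ℬ → arrPi ℬ 𝒜 (sigTerm 𝒜 L K) = 0 := by
    intro K hK hKB
    rw [sigTerm, dif_neg (fun hc => hKB (hsat K hK hc.2)), lmap_zero]
  rw [← Finset.sum_subset hsub h0]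
  refine Finset.sum_congr rfl fun K hK => ?_
  by_cases h : L ≤ K
  · rw [sigTerm, sigTerm, dif_pos ⟨hsub hK, h⟩, dif_pos ⟨hK, h⟩, arrPi_of, dif_pos hK]
  · rw [sigTerm, sigTerm, dif_neg (fun hc => h hc.2), dif_neg (fun hc => h hc.2), lmap_zero]

lemma arrPi_sigmaL_single (L H : HypSp ℓ) (hH𝒜 : H ∈ 𝒜) (hHB : H ∈ ℬ) (hLH : L ≤ H)
    (huniq : ∀ K ∈ ℬ, L ≤ K → K = H) :
    arrPi ℬ 𝒜 (sigmaL 𝒜 L) = of ℚ (⟨H, hHB⟩ : {H : HypSp ℓ // H ∈ ℬ}) := by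
  rw [sigmaL_eq, lmap_sum]
  rw [Finset.sum_eq_single_of_mem H hH𝒜 ?_]
  · rw [sigTerm, dif_pos ⟨hH𝒜, hLH⟩, arrPi_of, dif_pos hHB]
  · intro K hK hne
    by_cases h : L ≤ K
    · rw [sigTerm, dif_pos ⟨hK, h⟩, arrPi_of, dif_neg (fun hKB => hne (huniq K hKB h))]
    · rw [sigTerm, dif_neg (fun hc => h hc.2), lmap_zero]

end CHADP

namespace CHADP
open FreeLieAlgebra
variable {ℓ : ℕ} {ℬ 𝒜 : Finset (HypSp ℓ)}

lemma pi_ideal (harr : IsArrangement 𝒜) (hclosed : IsClosedSub ℬ 𝒜) :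
    holIdeal 𝒜 ≤ LieIdeal.comap (arrPi ℬ 𝒜) (holIdeal ℬ) := by
  rw [holIdeal, LieSubmodule.lieSpan_le]
  rintro z ⟨L, hL, H, hLH, rfl⟩
  rw [SetLike.mem_coe, LieIdeal.mem_comap, LieHom.map_lie]
  by_cases hHB : (H : HypSp ℓ) ∈ ℬ
  · by_cases hex : ∃ K ∈ ℬ, K ≠ (H : HypSp ℓ) ∧ L ≤ K
    · obtain ⟨K, hKB, hKH, hLK⟩ := hex
      have hLeq : L = (H : HypSp ℓ) ⊓ K :=
        flat_eq harr hL H.2 (hclosed.1 hKB) (Ne.symm hKH) hLH hLK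
      have hsat : ∀ c ∈ 𝒜, L ≤ c → c ∈ ℬ := fun c hc hLc =>
        closed_saturated hclosed harr hHB hKB (Ne.symm hKH) hc (hLeq ▸ hLc)
      rw [arrPi_sigmaL_sat L hclosed.1 hsat, arrPi_of, dif_pos hHB]
      exact LieSubmodule.subset_lieSpan
        ⟨L, ⟨(H : HypSp ℓ), hHB, K, hKB, Ne.symm hKH, hLeq⟩, ⟨(H : HypSp ℓ), hHB⟩, hLH, rfl⟩
    · push_neg at hex
      have huniq : ∀ K ∈ ℬ, L ≤ K → K = (H : HypSp ℓ) := by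
        intro K hK hLK
        by_contra hne
        exact (hex K hK hne) hLK
      rw [arrPi_sigmaL_single L (H : HypSp ℓ) H.2 hHB hLH huniq, arrPi_of, dif_pos hHB,
        lie_self]
      exact (holIdeal ℬ).zero_mem
  · rw [arrPi_of, dif_neg hHB, zero_lie]
    exact (holIdeal ℬ).zero_mem

lemma sigma_ideal (harr : IsArrangement 𝒜) (hclosed : IsClosedSub ℬ 𝒜) (hsub : ℬ ⊆ 𝒜) :
    holIdeal ℬ ≤ LieIdeal.comap (arrSigma ℬ 𝒜 hsub) (holIdeal 𝒜) := by
  rw [holIdeal, LieSubmodule.lieSpan_le]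
  rintro z ⟨L, ⟨α, hα, β, hβ, hne, hLeq⟩, H, hLH, rfl⟩
  rw [SetLike.mem_coe, LieIdeal.mem_comap, LieHom.map_lie]
  have hsat : ∀ c ∈ 𝒜, L ≤ c → c ∈ ℬ := fun c hc hLc =>
    closed_saturated hclosed harr hα hβ hne hc (hLeq ▸ hLc)
  rw [arrSigma_sigmaL hsub L hsat, arrSigma_of]
  exact LieSubmodule.subset_lieSpan
    ⟨L, ⟨α, hsub hα, β, hsub hβ, hne, hLeq⟩, _, hLH, rfl⟩

/-- Quotient map as a `LieHom`. -/
def mkLie {L₁ : Type*} [LieRing L₁] [LieAlgebra ℚ L₁] (I : LieIdeal ℚ L₁) :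
    L₁ →ₗ⁅ℚ⁆ L₁ ⧸ I :=
  { I.toSubmodule.mkQ with
    toFun := LieSubmodule.Quotient.mk (N := I)
    map_lie' := fun {x y} => LieSubmodule.Quotient.mk_bracket I x y }

lemma mkLie_apply {L₁ : Type*} [LieRing L₁] [LieAlgebra ℚ L₁] (I : LieIdeal ℚ L₁) (x : L₁) :
    mkLie I x = LieSubmodule.Quotient.mk' I x := rfl

/-- The underlying linear map of the descended hom. -/
def lqmLin {L₁ L₂ : Type*} [LieRing L₁] [LieAlgebra ℚ L₁] [LieRing L₂] [LieAlgebra ℚ L₂]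
    (f : L₁ →ₗ⁅ℚ⁆ L₂) (I : LieIdeal ℚ L₁) (J : LieIdeal ℚ L₂)
    (h : I ≤ LieIdeal.comap f J) : (L₁ ⧸ I) →ₗ[ℚ] (L₂ ⧸ J) :=
  Submodule.mapQ I.toSubmodule J.toSubmodule f.toLinearMap
    (fun x hx => LieIdeal.mem_comap.mp (h hx))

lemma mk'_bracket {L₁ : Type*} [LieRing L₁] [LieAlgebra ℚ L₁] (I : LieIdeal ℚ L₁) (x y : L₁) :
    LieSubmodule.Quotient.mk' I ⁅x, y⁆
      = ⁅LieSubmodule.Quotient.mk' I x, LieSubmodule.Quotient.mk' I y⁆ :=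
  LieSubmodule.Quotient.mk_bracket I x y

lemma lqmLin_mk {L₁ L₂ : Type*} [LieRing L₁] [LieAlgebra ℚ L₁] [LieRing L₂] [LieAlgebra ℚ L₂]
    (f : L₁ →ₗ⁅ℚ⁆ L₂) (I : LieIdeal ℚ L₁) (J : LieIdeal ℚ L₂)
    (h : I ≤ LieIdeal.comap f J) (c : L₁) :
    lqmLin f I J h (LieSubmodule.Quotient.mk' I c) = LieSubmodule.Quotient.mk' J (f c) := by
  apply Submodule.mapQ_apply

/-- Descend a Lie hom to quotients. -/
def lieQuotMap {L₁ L₂ : Type*} [LieRing L₁] [LieAlgebra ℚ L₁] [LieRing L₂] [LieAlgebra ℚ L₂]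
    (f : L₁ →ₗ⁅ℚ⁆ L₂) (I : LieIdeal ℚ L₁) (J : LieIdeal ℚ L₂)
    (h : I ≤ LieIdeal.comap f J) : (L₁ ⧸ I) →ₗ⁅ℚ⁆ (L₂ ⧸ J) :=
  { lqmLin f I J h with
    map_lie' := by
      intro x y
      obtain ⟨a, rfl⟩ := LieSubmodule.Quotient.surjective_mk' I x
      obtain ⟨b, rfl⟩ := LieSubmodule.Quotient.surjective_mk' I y
      show lqmLin f I J h ⁅LieSubmodule.Quotient.mk' I a, LieSubmodule.Quotient.mk' I b⁆
        = ⁅lqmLin f I J h (LieSubmodule.Quotient.mk' I a),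
           lqmLin f I J h (LieSubmodule.Quotient.mk' I b)⁆
      rw [← mk'_bracket, lqmLin_mk, lqmLin_mk, lqmLin_mk, LieHom.map_lie, mk'_bracket] }

lemma lieQuotMap_apply {L₁ L₂ : Type*} [LieRing L₁] [LieAlgebra ℚ L₁] [LieRing L₂]
    [LieAlgebra ℚ L₂] (f : L₁ →ₗ⁅ℚ⁆ L₂) (I : LieIdeal ℚ L₁) (J : LieIdeal ℚ L₂)
    (h : I ≤ LieIdeal.comap f J) (x : L₁) :
    lieQuotMap f I J h (LieSubmodule.Quotient.mk' I x) = LieSubmodule.Quotient.mk' J (f x) :=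
  lqmLin_mk f I J h x

/-- Every element of a quotient of a free Lie algebra lies in any Lie subalgebra containing
the classes of the generators. -/
lemma quot_gen {X : Type} (I : LieIdeal ℚ (FreeLieAlgebra ℚ X))
    (A : LieSubalgebra ℚ (FreeLieAlgebra ℚ X ⧸ I))
    (hA : ∀ x : X, LieSubmodule.Quotient.mk' I (FreeLieAlgebra.of ℚ x) ∈ A)
    (y : FreeLieAlgebra ℚ X ⧸ I) : y ∈ A := by
  obtain ⟨z, rfl⟩ := LieSubmodule.Quotient.surjective_mk' I y
  let g : FreeLieAlgebra ℚ X →ₗ⁅ℚ⁆ A := FreeLieAlgebra.lift ℚ (fun x => ⟨_, hA x⟩)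
  have key : A.incl.comp g = mkLie I := by
    apply FreeLieAlgebra.hom_ext
    intro x
    show A.incl (g (FreeLieAlgebra.of ℚ x)) = _
    rw [show g (FreeLieAlgebra.of ℚ x) = ⟨_, hA x⟩ from FreeLieAlgebra.lift_of_apply _ _]
    rfl
  have h2 : A.incl (g z) = LieSubmodule.Quotient.mk' I z := by
    rw [← mkLie_apply, ← key]; rfl
  rw [← h2]
  exact (g z).2

end CHADP

namespace CHADP
open FreeLieAlgebra
variable {ℓ : ℕ} (ℬ 𝒜 : Finset (HypSp ℓ))

def genSet : Set (Holonomy 𝒜) :=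
  {z | ∃ H : {H : HypSp ℓ // H ∈ 𝒜}, (H : HypSp ℓ) ∉ ℬ ∧
    z = LieSubmodule.Quotient.mk' (holIdeal 𝒜) (FreeLieAlgebra.of ℚ H)}

def NN : LieSubalgebra ℚ (Holonomy 𝒜) :=
  LieSubalgebra.lieSpan ℚ _ (genSet ℬ 𝒜)

def MM : Submodule ℚ (Holonomy 𝒜) :=
  Submodule.span ℚ {z | ∃ a ∈ NN ℬ 𝒜, ∃ b ∈ NN ℬ 𝒜, z = ⁅a, b⁆}

variable {ℬ 𝒜}

lemma brSet_mem {a b : Holonomy 𝒜} (ha : a ∈ NN ℬ 𝒜) (hb : b ∈ NN ℬ 𝒜) :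
    ⁅a, b⁆ ∈ MM ℬ 𝒜 :=
  Submodule.subset_span ⟨a, ha, b, hb, rfl⟩

lemma gen_mem_NN {a : {H : HypSp ℓ // H ∈ 𝒜}} (ha : (a : HypSp ℓ) ∉ ℬ) :
    LieSubmodule.Quotient.mk' (holIdeal 𝒜) (FreeLieAlgebra.of ℚ a) ∈ NN ℬ 𝒜 :=
  LieSubalgebra.subset_lieSpan ⟨a, ha, rfl⟩

lemma lie_sum' {L : Type*} [LieRing L] (x : L) {ι : Type*} (s : Finset ι) (g : ι → L) :
    ⁅x, ∑ i ∈ s, g i⁆ = ∑ i ∈ s, ⁅x, g i⁆ := by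
  induction s using Finset.cons_induction with
  | empty => simp
  | cons a s ha ih => rw [Finset.sum_cons, Finset.sum_cons, lie_add, ih]

lemma mm_sum {ι : Type*} (s : Finset ι) (g : ι → Holonomy 𝒜)
    (h : ∀ i ∈ s, g i ∈ MM ℬ 𝒜) : (∑ i ∈ s, g i) ∈ MM ℬ 𝒜 :=
  Submodule.sum_mem _ h

lemma mk'_sum {L₁ : Type*} [LieRing L₁] [LieAlgebra ℚ L₁] (I : LieIdeal ℚ L₁) {ι : Type*}
    (s : Finset ι) (g : ι → L₁) :
    LieSubmodule.Quotient.mk' I (∑ i ∈ s, g i)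
      = ∑ i ∈ s, LieSubmodule.Quotient.mk' I (g i) := by
  induction s using Finset.cons_induction with
  | empty => exact map_zero _
  | cons a s ha ih => rw [Finset.sum_cons, Finset.sum_cons, map_add, ih]

lemma key_rel (harr : IsArrangement 𝒜) (hclosed : IsClosedSub ℬ 𝒜)
    {H c : HypSp ℓ} (hH𝒜 : H ∈ 𝒜) (hHB : H ∈ ℬ) (hc𝒜 : c ∈ 𝒜) (hcB : c ∉ ℬ) :
    LieSubmodule.Quotient.mk' (holIdeal 𝒜)
      ⁅FreeLieAlgebra.of ℚ (⟨H, hH𝒜⟩ : {K : HypSp ℓ // K ∈ 𝒜}),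
       FreeLieAlgebra.of ℚ (⟨c, hc𝒜⟩ : {K : HypSp ℓ // K ∈ 𝒜})⁆ ∈ MM ℬ 𝒜 := by
  classical
  have hne : H ≠ c := fun h => hcB (h ▸ hHB)
  have hrel : ⁅FreeLieAlgebra.of ℚ (⟨c, hc𝒜⟩ : {K : HypSp ℓ // K ∈ 𝒜}),
      sigmaL 𝒜 (H ⊓ c)⁆ ∈ holIdeal 𝒜 :=
    LieSubmodule.subset_lieSpan ⟨H ⊓ c, ⟨H, hH𝒜, c, hc𝒜, hne, rfl⟩, ⟨c, hc𝒜⟩, inf_le_right, rfl⟩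
  have hzero : LieSubmodule.Quotient.mk' (holIdeal 𝒜)
      ⁅FreeLieAlgebra.of ℚ (⟨c, hc𝒜⟩ : {K : HypSp ℓ // K ∈ 𝒜}), sigmaL 𝒜 (H ⊓ c)⁆ = 0 :=
    (LieSubmodule.Quotient.mk_eq_zero _).mpr hrel
  have hH' : sigTerm 𝒜 (H ⊓ c) H = of ℚ (⟨H, hH𝒜⟩ : {K : HypSp ℓ // K ∈ 𝒜}) := by
    rw [sigTerm, dif_pos ⟨hH𝒜, inf_le_left⟩]
  have hsplit : sigmaL 𝒜 (H ⊓ c) = of ℚ (⟨H, hH𝒜⟩ : {K : HypSp ℓ // K ∈ 𝒜})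
      + ∑ K ∈ 𝒜.erase H, sigTerm 𝒜 (H ⊓ c) K := by
    rw [sigmaL_eq, ← Finset.add_sum_erase 𝒜 (sigTerm 𝒜 (H ⊓ c)) hH𝒜, hH']
  rw [hsplit, lie_add] at hzero
  rw [map_add] at hzero
  have h3 : LieSubmodule.Quotient.mk' (holIdeal 𝒜)
      ⁅FreeLieAlgebra.of ℚ (⟨H, hH𝒜⟩ : {K : HypSp ℓ // K ∈ 𝒜}),
       FreeLieAlgebra.of ℚ (⟨c, hc𝒜⟩ : {K : HypSp ℓ // K ∈ 𝒜})⁆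
      = LieSubmodule.Quotient.mk' (holIdeal 𝒜)
        ⁅FreeLieAlgebra.of ℚ (⟨c, hc𝒜⟩ : {K : HypSp ℓ // K ∈ 𝒜}),
         ∑ K ∈ 𝒜.erase H, sigTerm 𝒜 (H ⊓ c) K⁆ := by
    rw [← lie_skew, map_neg]
    exact neg_eq_of_add_eq_zero_right hzero
  rw [h3, lie_sum', mk'_sum]
  apply mm_sum
  intro K hK
  obtain ⟨hKne, hK𝒜⟩ := Finset.mem_erase.mp hK
  by_cases hLK : H ⊓ c ≤ K
  · have hKB : K ∉ ℬ := by
      intro hKB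
      have h4 := hclosed.2 H hHB K hKB (Ne.symm hKne) c hc𝒜 hcB
      have h5 : H ⊓ K ⊓ c = H ⊓ c := by
        rw [inf_right_comm]; exact inf_eq_left.mpr hLK
      have h6 : flatRank (H ⊓ c) = 2 := flatRank_inf (harr H hH𝒜) (harr c hc𝒜) hne
      rw [h5, h6] at h4
      omega
    rw [sigTerm, dif_pos ⟨hK𝒜, hLK⟩, mk'_bracket]
    exact brSet_mem (gen_mem_NN hcB) (gen_mem_NN hKB)
  · rw [sigTerm, dif_neg (fun hx => hLK hx.2), lie_zero, map_zero]
    exact (MM ℬ 𝒜).zero_mem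

end CHADP

namespace CHADP
open FreeLieAlgebra
variable {ℓ : ℕ} {ℬ 𝒜 : Finset (HypSp ℓ)}

lemma MM_le_NN : MM ℬ 𝒜 ≤ (NN ℬ 𝒜).toSubmodule := by
  rw [MM, Submodule.span_le]
  rintro z ⟨a, ha, b, hb, rfl⟩
  exact (NN ℬ 𝒜).lie_mem ha hb

lemma NN_lie (harr : IsArrangement 𝒜) (hclosed : IsClosedSub ℬ 𝒜)
    (g x : Holonomy 𝒜) (hx : x ∈ NN ℬ 𝒜) : ⁅g, x⁆ ∈ NN ℬ 𝒜 := by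
  have hgen : ∀ G : {H : HypSp ℓ // H ∈ 𝒜}, ∀ y ∈ NN ℬ 𝒜,
      ⁅LieSubmodule.Quotient.mk' (holIdeal 𝒜) (of ℚ G), y⁆ ∈ NN ℬ 𝒜 := by
    intro G y hy
    have hconj : y ∈ NN ℬ 𝒜 ∧
        ⁅LieSubmodule.Quotient.mk' (holIdeal 𝒜) (of ℚ G), y⁆ ∈ NN ℬ 𝒜 := by
      refine LieSubalgebra.lieSpan_induction (R := ℚ) (L := Holonomy 𝒜)
        (p := fun z _ => z ∈ NN ℬ 𝒜 ∧
          ⁅LieSubmodule.Quotient.mk' (holIdeal 𝒜) (of ℚ G), z⁆ ∈ NN ℬ 𝒜) ?_ ?_ ?_ ?_ ?_ hy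
      · rintro z ⟨a, haB, rfl⟩
        refine ⟨gen_mem_NN haB, ?_⟩
        by_cases hGB : (G : HypSp ℓ) ∈ ℬ
        · rw [← mk'_bracket]
          exact MM_le_NN (key_rel harr hclosed G.2 hGB a.2 haB)
        · exact (NN ℬ 𝒜).lie_mem (gen_mem_NN hGB) (gen_mem_NN haB)
      · exact ⟨zero_mem _, by rw [lie_zero]; exact zero_mem _⟩
      · rintro x y _ _ ⟨hx1, hx2⟩ ⟨hy1, hy2⟩
        exact ⟨add_mem hx1 hy1, by rw [lie_add]; exact add_mem hx2 hy2⟩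
      · rintro r x _ ⟨h1, h2⟩
        exact ⟨(NN ℬ 𝒜).smul_mem r h1, by rw [lie_smul]; exact (NN ℬ 𝒜).smul_mem r h2⟩
      · rintro x y _ _ ⟨hx1, hx2⟩ ⟨hy1, hy2⟩
        refine ⟨(NN ℬ 𝒜).lie_mem hx1 hy1, ?_⟩
        rw [leibniz_lie]
        exact add_mem ((NN ℬ 𝒜).lie_mem hx2 hy1) ((NN ℬ 𝒜).lie_mem hx1 hy2)
    exact hconj.2
  let P : LieSubalgebra ℚ (Holonomy 𝒜) :=
    { carrier := {g | ∀ y ∈ NN ℬ 𝒜, ⁅g, y⁆ ∈ NN ℬ 𝒜}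
      add_mem' := fun {a b} ha hb y hy => by
        rw [add_lie]; exact add_mem (ha y hy) (hb y hy)
      zero_mem' := fun y hy => by rw [zero_lie]; exact zero_mem _
      smul_mem' := fun r a ha y hy => by
        rw [smul_lie]; exact (NN ℬ 𝒜).smul_mem r (ha y hy)
      lie_mem' := fun {a b} ha hb y hy => by
        rw [lie_lie]; exact sub_mem (ha _ (hb y hy)) (hb _ (ha y hy)) }
  have hg : g ∈ P := quot_gen (holIdeal 𝒜) P (fun a => hgen a) g
  exact hg x hx

lemma MM_lie (harr : IsArrangement 𝒜) (hclosed : IsClosedSub ℬ 𝒜)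
    (g m : Holonomy 𝒜) (hm : m ∈ MM ℬ 𝒜) : ⁅g, m⁆ ∈ MM ℬ 𝒜 := by
  refine Submodule.span_induction ?_ ?_ ?_ ?_ hm
  · rintro z ⟨a, ha, b, hb, rfl⟩
    rw [leibniz_lie]
    exact add_mem (brSet_mem (NN_lie harr hclosed g a ha) hb)
      (brSet_mem ha (NN_lie harr hclosed g b hb))
  · rw [lie_zero]; exact zero_mem _
  · intro x y _ _ hx hy
    rw [lie_add]; exact add_mem hx hy
  · intro r x _ hx
    rw [lie_smul]; exact Submodule.smul_mem _ r hx

def freeK (ℬ 𝒜 : Finset (HypSp ℓ)) : LieIdeal ℚ (FreeLie 𝒜) :=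
  LieSubmodule.lieSpan ℚ (FreeLie 𝒜)
    {z | ∃ c : {H : HypSp ℓ // H ∈ 𝒜}, (c : HypSp ℓ) ∉ ℬ ∧ z = of ℚ c}

lemma mk'_freeK_mem (harr : IsArrangement 𝒜) (hclosed : IsClosedSub ℬ 𝒜)
    {k : FreeLie 𝒜} (hk : k ∈ freeK ℬ 𝒜) :
    LieSubmodule.Quotient.mk' (holIdeal 𝒜) k ∈ NN ℬ 𝒜 := by
  let N' : LieSubmodule ℚ (FreeLie 𝒜) (FreeLie 𝒜) :=
    { carrier := {y | LieSubmodule.Quotient.mk' (holIdeal 𝒜) y ∈ NN ℬ 𝒜}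
      add_mem' := fun {a b} ha hb => by
        show LieSubmodule.Quotient.mk' (holIdeal 𝒜) (a + b) ∈ NN ℬ 𝒜
        rw [map_add]; exact add_mem ha hb
      zero_mem' := by
        show LieSubmodule.Quotient.mk' (holIdeal 𝒜) 0 ∈ NN ℬ 𝒜
        rw [map_zero]; exact zero_mem _
      smul_mem' := fun r a ha => by
        show LieSubmodule.Quotient.mk' (holIdeal 𝒜) (r • a) ∈ NN ℬ 𝒜
        rw [map_smul]; exact (NN ℬ 𝒜).smul_mem r ha
      lie_mem := fun {g y} hy => by
        show LieSubmodule.Quotient.mk' (holIdeal 𝒜) ⁅g, y⁆ ∈ NN ℬ 𝒜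
        rw [mk'_bracket]; exact NN_lie harr hclosed _ _ hy }
  have hle : freeK ℬ 𝒜 ≤ N' := by
    rw [freeK, LieSubmodule.lieSpan_le]
    rintro z ⟨c, hcB, rfl⟩
    exact gen_mem_NN hcB
  exact hle hk

lemma sp_id (hsub : ℬ ⊆ 𝒜) : (arrPi ℬ 𝒜).comp (arrSigma ℬ 𝒜 hsub) = LieHom.id := by
  apply FreeLieAlgebra.hom_ext
  intro x
  show arrPi ℬ 𝒜 (arrSigma ℬ 𝒜 hsub (of ℚ x)) = of ℚ x
  rw [arrSigma_of, arrPi_of, dif_pos x.2]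

lemma sub_mem_freeK (hsub : ℬ ⊆ 𝒜) (y : FreeLie 𝒜) :
    y - arrSigma ℬ 𝒜 hsub (arrPi ℬ 𝒜 y) ∈ freeK ℬ 𝒜 := by
  have key : (mkLie (freeK ℬ 𝒜)).comp ((arrSigma ℬ 𝒜 hsub).comp (arrPi ℬ 𝒜))
      = mkLie (freeK ℬ 𝒜) := by
    apply FreeLieAlgebra.hom_ext
    intro x
    show mkLie (freeK ℬ 𝒜) (arrSigma ℬ 𝒜 hsub (arrPi ℬ 𝒜 (of ℚ x)))
      = mkLie (freeK ℬ 𝒜) (of ℚ x)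
    by_cases hB : (x : HypSp ℓ) ∈ ℬ
    · rw [arrPi_of, dif_pos hB, arrSigma_of]
    · rw [arrPi_of, dif_neg hB, lmap_zero, lmap_zero]
      have hm : of ℚ x ∈ {z : FreeLie 𝒜 | ∃ c : {H : HypSp ℓ // H ∈ 𝒜},
          (c : HypSp ℓ) ∉ ℬ ∧ z = of ℚ c} := ⟨x, hB, rfl⟩
      exact ((LieSubmodule.Quotient.mk_eq_zero _).mpr
        (LieSubmodule.subset_lieSpan hm)).symm
  have h2 : mkLie (freeK ℬ 𝒜) (y - arrSigma ℬ 𝒜 hsub (arrPi ℬ 𝒜 y)) = 0 := by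
    have h3 := DFunLike.congr_fun key y
    simp only [LieHom.comp_apply] at h3
    rw [map_sub, h3, sub_self]
  exact (LieSubmodule.Quotient.mk_eq_zero _).mp h2

end CHADP

namespace CHADP
open FreeLieAlgebra
variable {ℓ : ℕ} {ℬ 𝒜 : Finset (HypSp ℓ)}

lemma stageB (harr : IsArrangement 𝒜) (hclosed : IsClosedSub ℬ 𝒜) (hsub : ℬ ⊆ 𝒜)
    (φ : Holonomy ℬ →ₗ⁅ℚ⁆ Holonomy 𝒜)
    (hφ : ∀ z, φ (LieSubmodule.Quotient.mk' (holIdeal ℬ) z)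
      = LieSubmodule.Quotient.mk' (holIdeal 𝒜) (arrSigma ℬ 𝒜 hsub z))
    {x : Holonomy 𝒜} (hx : x ∈ NN ℬ 𝒜) (q : Holonomy ℬ) : ⁅x, φ q⁆ ∈ MM ℬ 𝒜 := by
  have hA : ∀ a : {H : HypSp ℓ // H ∈ 𝒜}, (a : HypSp ℓ) ∉ ℬ → ∀ q : Holonomy ℬ,
      ⁅LieSubmodule.Quotient.mk' (holIdeal 𝒜) (of ℚ a), φ q⁆ ∈ MM ℬ 𝒜 := by
    intro a haB q
    let A : LieSubalgebra ℚ (Holonomy ℬ) :=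
      { carrier := {q | ⁅LieSubmodule.Quotient.mk' (holIdeal 𝒜) (of ℚ a), φ q⁆ ∈ MM ℬ 𝒜}
        zero_mem' := by
          show ⁅LieSubmodule.Quotient.mk' (holIdeal 𝒜) (of ℚ a), φ 0⁆ ∈ MM ℬ 𝒜
          rw [map_zero, lie_zero]; exact zero_mem _
        add_mem' := fun {p q'} hp hq => by
          show ⁅LieSubmodule.Quotient.mk' (holIdeal 𝒜) (of ℚ a), φ (p + q')⁆ ∈ MM ℬ 𝒜
          rw [map_add, lie_add]; exact add_mem hp hq
        smul_mem' := fun r p hp => by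
          show ⁅LieSubmodule.Quotient.mk' (holIdeal 𝒜) (of ℚ a), φ (r • p)⁆ ∈ MM ℬ 𝒜
          rw [map_smul, lie_smul]; exact Submodule.smul_mem _ r hp
        lie_mem' := fun {p q'} hp hq => by
          show ⁅LieSubmodule.Quotient.mk' (holIdeal 𝒜) (of ℚ a), φ ⁅p, q'⁆⁆ ∈ MM ℬ 𝒜
          rw [LieHom.map_lie, leibniz_lie]
          refine add_mem ?_ (MM_lie harr hclosed _ _ hq)
          rw [← lie_skew]
          exact neg_mem (MM_lie harr hclosed _ _ hp) }
    have hq : q ∈ A := by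
      refine quot_gen (holIdeal ℬ) A ?_ q
      intro b
      show ⁅LieSubmodule.Quotient.mk' (holIdeal 𝒜) (of ℚ a),
        φ (LieSubmodule.Quotient.mk' (holIdeal ℬ) (of ℚ b))⁆ ∈ MM ℬ 𝒜
      rw [hφ, arrSigma_of, ← lie_skew]
      refine neg_mem ?_
      rw [← mk'_bracket]
      exact key_rel harr hclosed (hsub b.2) b.2 a.2 haB
    exact hq
  have hB : ∀ q : Holonomy ℬ, ⁅x, φ q⁆ ∈ MM ℬ 𝒜 := by
    refine LieSubalgebra.lieSpan_induction (R := ℚ) (L := Holonomy 𝒜)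
      (p := fun x _ => ∀ q : Holonomy ℬ, ⁅x, φ q⁆ ∈ MM ℬ 𝒜) ?_ ?_ ?_ ?_ ?_ hx
    · rintro z ⟨a, haB, rfl⟩
      exact hA a haB
    · intro q'; rw [zero_lie]; exact zero_mem _
    · intro x y _ _ hx hy q'; rw [add_lie]; exact add_mem (hx q') (hy q')
    · intro r x _ hx q'; rw [smul_lie]; exact Submodule.smul_mem _ r (hx q')
    · intro x y _ _ hx hy q'
      rw [lie_lie]
      exact sub_mem (MM_lie harr hclosed _ _ (hy q')) (MM_lie harr hclosed _ _ (hx q'))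
  exact hB q

end CHADP

theorem closed_holonomy_almost_direct_product {ℓ : ℕ} (ℬ 𝒜 : Finset (HypSp ℓ))
    (harr : IsArrangement 𝒜) (hclosed : IsClosedSub ℬ 𝒜) (hsub : ℬ ⊆ 𝒜) :
    ∃ (pStar : Holonomy 𝒜 →ₗ⁅ℚ⁆ Holonomy ℬ) (sStar : Holonomy ℬ →ₗ⁅ℚ⁆ Holonomy 𝒜),
      -- π₊ and σ₊ are induced by π and σ on the holonomy quotients
      (∀ x : FreeLie 𝒜, pStar (LieSubmodule.Quotient.mk' (holIdeal 𝒜) x)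
          = LieSubmodule.Quotient.mk' (holIdeal ℬ) (arrPi ℬ 𝒜 x)) ∧
      (∀ y : FreeLie ℬ, sStar (LieSubmodule.Quotient.mk' (holIdeal ℬ) y)
          = LieSubmodule.Quotient.mk' (holIdeal 𝒜) (arrSigma ℬ 𝒜 hsub y)) ∧
      -- π₊ is surjective and split by σ₊
      Function.Surjective pStar ∧
      pStar.comp sStar = LieHom.id ∧
      -- the kernel of π₊ is the Lie subalgebra generated by the classes of 𝒜∖ℬ
      ((pStar.ker : Set (Holonomy 𝒜)) =
        (LieSubalgebra.lieSpan ℚ (Holonomy 𝒜)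
          {z | ∃ H : {H : HypSp ℓ // H ∈ 𝒜}, (H : HypSp ℓ) ∉ ℬ ∧
            z = LieSubmodule.Quotient.mk' (holIdeal 𝒜) (FreeLieAlgebra.of ℚ H)} :
              Set (Holonomy 𝒜))) ∧
      -- almost-direct product condition: [Ker π₊, σ₊(𝔥(ℬ))] ⊆ [Ker π₊, Ker π₊]
      (∀ x ∈ pStar.ker, ∀ q : Holonomy ℬ,
        ⁅x, sStar q⁆ ∈ Submodule.span ℚ
          {z : Holonomy 𝒜 | ∃ a ∈ pStar.ker, ∃ b ∈ pStar.ker, z = ⁅a, b⁆}) := by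
  classical
  let pS : Holonomy 𝒜 →ₗ⁅ℚ⁆ Holonomy ℬ := CHADP.lieQuotMap (arrPi ℬ 𝒜) _ _ (CHADP.pi_ideal harr hclosed)
  let sS : Holonomy ℬ →ₗ⁅ℚ⁆ Holonomy 𝒜 :=
    CHADP.lieQuotMap (arrSigma ℬ 𝒜 hsub) _ _ (CHADP.sigma_ideal harr hclosed hsub)
  have hp : ∀ x, pS (LieSubmodule.Quotient.mk' (holIdeal 𝒜) x)
      = LieSubmodule.Quotient.mk' (holIdeal ℬ) (arrPi ℬ 𝒜 x) :=
    fun x => CHADP.lieQuotMap_apply _ _ _ _ x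
  have hs : ∀ y, sS (LieSubmodule.Quotient.mk' (holIdeal ℬ) y)
      = LieSubmodule.Quotient.mk' (holIdeal 𝒜) (arrSigma ℬ 𝒜 hsub y) :=
    fun y => CHADP.lieQuotMap_apply _ _ _ _ y
  have hcomp : pS.comp sS = LieHom.id := by
    apply LieHom.ext
    intro q
    obtain ⟨z, rfl⟩ := LieSubmodule.Quotient.surjective_mk' (holIdeal ℬ) q
    have hps : arrPi ℬ 𝒜 (arrSigma ℬ 𝒜 hsub z) = z := by
      have h := DFunLike.congr_fun (CHADP.sp_id hsub) z
      simpa only [LieHom.comp_apply, LieHom.id_apply] using h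
    rw [LieHom.comp_apply, hs, hp, hps, LieHom.id_apply]
  have hsurj : Function.Surjective pS := by
    intro q
    refine ⟨sS q, ?_⟩
    have h := DFunLike.congr_fun hcomp q
    simpa only [LieHom.comp_apply, LieHom.id_apply] using h
  have hker : (pS.ker : Set (Holonomy 𝒜)) = (CHADP.NN ℬ 𝒜 : Set (Holonomy 𝒜)) := by
    apply Set.Subset.antisymm
    · intro x hx
      obtain ⟨y, rfl⟩ := LieSubmodule.Quotient.surjective_mk' (holIdeal 𝒜) x
      have h1 : pS (LieSubmodule.Quotient.mk' (holIdeal 𝒜) y) = 0 := LieHom.mem_ker.mp hx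
      rw [hp] at h1
      have h0 : arrPi ℬ 𝒜 y ∈ holIdeal ℬ := (LieSubmodule.Quotient.mk_eq_zero _).mp h1
      have h2 : arrSigma ℬ 𝒜 hsub (arrPi ℬ 𝒜 y) ∈ holIdeal 𝒜 :=
        LieIdeal.mem_comap.mp (CHADP.sigma_ideal harr hclosed hsub h0)
      have h3 : LieSubmodule.Quotient.mk' (holIdeal 𝒜) y
          = LieSubmodule.Quotient.mk' (holIdeal 𝒜) (y - arrSigma ℬ 𝒜 hsub (arrPi ℬ 𝒜 y)) := by
        rw [map_sub, (LieSubmodule.Quotient.mk_eq_zero _).mpr h2, sub_zero]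
      show LieSubmodule.Quotient.mk' (holIdeal 𝒜) y ∈ CHADP.NN ℬ 𝒜
      rw [h3]
      exact CHADP.mk'_freeK_mem harr hclosed (CHADP.sub_mem_freeK hsub y)
    · intro x hx
      have hx' : x ∈ CHADP.NN ℬ 𝒜 := hx
      have hz : pS x = 0 := by
        refine LieSubalgebra.lieSpan_induction (R := ℚ) (L := Holonomy 𝒜)
          (p := fun z _ => pS z = 0) ?_ ?_ ?_ ?_ ?_ hx'
        · rintro z ⟨a, haB, rfl⟩
          rw [hp, CHADP.arrPi_of, dif_neg haB, map_zero]
        · exact map_zero _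
        · intro z w _ _ hz hw; rw [map_add, hz, hw, add_zero]
        · intro r z _ hz; rw [map_smul, hz, smul_zero]
        · intro z w _ _ hz hw; rw [LieHom.map_lie, hz, zero_lie]
      exact LieHom.mem_ker.mpr hz
  refine ⟨pS, sS, hp, hs, hsurj, hcomp, hker, ?_⟩
  intro x hx q
  have hxN : x ∈ CHADP.NN ℬ 𝒜 := by
    have hmem : x ∈ (pS.ker : Set (Holonomy 𝒜)) := hx
    rw [hker] at hmem
    exact hmem
  have hMM : ⁅x, sS q⁆ ∈ CHADP.MM ℬ 𝒜 := CHADP.stageB harr hclosed hsub sS hs hxN q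
  have hmem : ∀ a : Holonomy 𝒜, a ∈ pS.ker ↔ a ∈ CHADP.NN ℬ 𝒜 := by
    intro a
    constructor
    · intro h
      have h' : a ∈ (pS.ker : Set (Holonomy 𝒜)) := h
      rw [hker] at h'; exact h'
    · intro h
      have h' : a ∈ (CHADP.NN ℬ 𝒜 : Set (Holonomy 𝒜)) := h
      rw [← hker] at h'; exact h'
  have hsets : {z : Holonomy 𝒜 | ∃ a ∈ pS.ker, ∃ b ∈ pS.ker, z = ⁅a, b⁆}
      = {z : Holonomy 𝒜 | ∃ a ∈ CHADP.NN ℬ 𝒜, ∃ b ∈ CHADP.NN ℬ 𝒜, z = ⁅a, b⁆} := by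
    ext z
    constructor
    · rintro ⟨a, ha, b, hb, rfl⟩; exact ⟨a, (hmem a).mp ha, b, (hmem b).mp hb, rfl⟩
    · rintro ⟨a, ha, b, hb, rfl⟩; exact ⟨a, (hmem a).mpr ha, b, (hmem b).mpr hb, rfl⟩
  rw [hsets]
  exact hMM


end
end

section
/- Let ℬ be a closed and complete subarrangement of a central arrangement 𝒜. Then r(𝒜) − r(ℬ) ≤ 1. -/
open Module

noncomputable section

/-- `ℬ` is a complete subarrangement of `𝒜`. -/
def IsCompleteSub {ℓ : ℕ} (ℬ 𝒜 : Finset (HypSp ℓ)) : Prop :=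
  ℬ ⊆ 𝒜 ∧ ∀ a ∈ 𝒜, a ∉ ℬ → ∀ b ∈ 𝒜, b ∉ ℬ → a ≠ b →
    ∃ γ ∈ ℬ, flatRank (a ⊓ b ⊓ γ) = 2

/- STATEMENT 15: If ℬ is a closed and complete subarrangement of the central
arrangement 𝒜, then r(𝒜) − r(ℬ) ≤ 1, i.e. r(𝒜) ≤ r(ℬ) + 1. -/

theorem closed_complete_rank {ℓ : ℕ} (ℬ 𝒜 : Finset (HypSp ℓ))
    (harr : IsArrangement 𝒜) (hclosed : IsClosedSub ℬ 𝒜) (hcomplete : IsCompleteSub ℬ 𝒜) :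
    flatRank (𝒜.inf id) ≤ flatRank (ℬ.inf id) + 1 := by
  have hsub : ℬ ⊆ 𝒜 := hclosed.1
  have hfr : ∀ s : Submodule ℂ (Fin ℓ → ℂ), finrank ℂ s ≤ ℓ := by
    intro s; have := Submodule.finrank_le s; simpa using this
  by_cases hall : ∀ a ∈ 𝒜, a ∈ ℬ
  · have : 𝒜 = ℬ := Finset.Subset.antisymm hall hsub
    simp [this]
  · push_neg at hall
    obtain ⟨c, hc𝒜, hcℬ⟩ := hall
    set X := ℬ.inf id with hX
    -- key: every hyperplane of 𝒜 contains X ⊓ c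
    have hkey : X ⊓ c ≤ 𝒜.inf id := by
      apply Finset.le_inf
      intro a ha
      by_cases haB : a ∈ ℬ
      · exact le_trans inf_le_left (Finset.inf_le haB)
      · by_cases hac : a = c
        · simpa [hac] using (inf_le_right : X ⊓ c ≤ c)
        · obtain ⟨γ, hγB, hγr⟩ := hcomplete.2 a ha haB c hc𝒜 hcℬ hac
          -- c and γ are distinct hyperplanes
          have hcγ : c ≠ γ := fun h => hcℬ (h ▸ hγB)
          have hfc : finrank ℂ c + 1 = ℓ := harr c hc𝒜
          have hfγ : finrank ℂ γ + 1 = ℓ := harr γ (hsub hγB)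
          have hlt : (c : Submodule ℂ (Fin ℓ → ℂ)) < c ⊔ γ := by
            rcases lt_or_eq_of_le (le_sup_left : c ≤ c ⊔ γ) with h | h
            · exact h
            · exfalso
              have hγle : γ ≤ c := by
                have := (le_sup_right : γ ≤ c ⊔ γ); rw [← h] at this; exact this
              exact hcγ (Submodule.eq_of_le_of_finrank_le hγle (by omega)).symm
          have hsupfr : finrank ℂ (c ⊔ γ : Submodule ℂ (Fin ℓ → ℂ)) = ℓ := by
            have h1 := Submodule.finrank_lt_finrank_of_lt hlt
            have h2 := hfr (c ⊔ γ)
            omega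
          have hinf : finrank ℂ (c ⊓ γ : Submodule ℂ (Fin ℓ → ℂ)) = ℓ - 2 := by
            have := Submodule.finrank_sup_add_finrank_inf_eq c γ
            omega
          -- flatRank (a ⊓ c ⊓ γ) = 2 means finrank = ℓ - 2
          have hrge : finrank ℂ (a ⊓ c ⊓ γ : Submodule ℂ (Fin ℓ → ℂ)) = ℓ - 2 ∧ 2 ≤ ℓ := by
            have h2 := hfr (a ⊓ c ⊓ γ)
            unfold flatRank at hγr
            constructor <;> omega
          have hle : (a ⊓ c ⊓ γ : Submodule ℂ (Fin ℓ → ℂ)) ≤ c ⊓ γ :=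
            inf_le_inf_right γ inf_le_right
          have heq : (a ⊓ c ⊓ γ : Submodule ℂ (Fin ℓ → ℂ)) = c ⊓ γ :=
            Submodule.eq_of_le_of_finrank_le hle (by omega)
          have hca : (c ⊓ γ : Submodule ℂ (Fin ℓ → ℂ)) ≤ a := by
            rw [← heq]; exact le_trans inf_le_left inf_le_left
          calc X ⊓ c ≤ γ ⊓ c := inf_le_inf_right c (Finset.inf_le hγB)
            _ = c ⊓ γ := inf_comm γ c
            _ ≤ a := hca
    -- rank of X ⊓ c is at most rank X + 1
    have hmono : finrank ℂ (X ⊓ c : Submodule ℂ (Fin ℓ → ℂ)) ≤ finrank ℂ (𝒜.inf id : Submodule ℂ (Fin ℓ → ℂ)) :=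
      Submodule.finrank_mono hkey
    have hfc : finrank ℂ c + 1 = ℓ := harr c hc𝒜
    have hinf := Submodule.finrank_sup_add_finrank_inf_eq X c
    have hsup := hfr (X ⊔ c)
    unfold flatRank
    omega

end
end
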